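/- Let (a_k) be a sequence in X with d(o, a_k) → ∞ such that the functions ξ_{a_k} converge pointwise on X to a function ξ : X → ℝ. Let p ∈ X, for each k let γ_k be a geodesic from p to a_k, and suppose γ is a geodesic ray from p such that for every s ≥ 0 one has γ_k(s) → γ(s) as k → ∞. Then for every x ∈ X, ξ(x) ≤ ξ(p) + b_γ(x), where b_γ is the Busemann function of the ray γ. -/
import Mathlib


open Filter Metric Topology

/-- Lemma 2.1(3): if `ξ` is a horofunction, the pointwise limit of `ξ_{a_k}` with
`d(o, a_k) → ∞`, and `γ` is a geodesic ray from `p` which is the limit of geodesics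
`γ_k` from `p` to `a_k`, then `ξ(x) ≤ ξ(p) + b_γ(x)` where `b_γ` is the Busemann
function of the ray `γ`, i.e. `b_γ(x) = lim_{s→∞} (d(x, γ(s)) − s)`. -/
theorem xi_le_busemann {X : Type*} [MetricSpace X] (o : X)
    (a : ℕ → X) (ha : Tendsto (fun k => dist o (a k)) atTop atTop)
    (ξ : X → ℝ)
    (hξ : ∀ z : X, Tendsto (fun k => dist z (a k) - dist o (a k)) atTop (𝓝 (ξ z)))
    (p : X) (γk : ℕ → ℝ → X)
    (hγk0 : ∀ k, γk k 0 = p)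
    (hγk1 : ∀ k, γk k (dist p (a k)) = a k)
    (hγkgeo : ∀ k, ∀ s ∈ Set.Icc 0 (dist p (a k)), ∀ t ∈ Set.Icc 0 (dist p (a k)),
      dist (γk k s) (γk k t) = |s - t|)
    (γ : ℝ → X) (hγ0 : γ 0 = p)
    (hγray : ∀ s t : ℝ, 0 ≤ s → 0 ≤ t → dist (γ s) (γ t) = |s - t|)
    (hconv : ∀ s : ℝ, 0 ≤ s → Tendsto (fun k => γk k s) atTop (𝓝 (γ s))) :
    ∀ x : X, ∀ b : ℝ, Tendsto (fun s : ℝ => dist x (γ s) - s) atTop (𝓝 b) →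
      ξ x ≤ ξ p + b := by
  intro x b hb
  -- Step 1: for each s ≥ 0, ξ x ≤ ξ p + (dist x (γ s) - s)
  have key : ∀ s : ℝ, 0 ≤ s → ξ x ≤ ξ p + (dist x (γ s) - s) := by
    intro s hs
    -- eventually dist p (a k) ≥ s
    have hpa : Tendsto (fun k => dist p (a k)) atTop atTop := by
      refine tendsto_atTop_mono (fun k => ?_) (tendsto_atTop_add_const_right _ (-(dist o p)) ha)
      have := dist_triangle o p (a k)
      linarith [this]
    have hev : ∀ᶠ k in atTop, s ≤ dist p (a k) := hpa.eventually_ge_atTop s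
    have hineq : ∀ᶠ k in atTop,
        dist x (a k) - dist o (a k) ≤
          dist x (γk k s) + (dist p (a k) - dist o (a k)) - s := by
      filter_upwards [hev] with k hk
      have hmem : s ∈ Set.Icc 0 (dist p (a k)) := ⟨hs, hk⟩
      have hmem2 : dist p (a k) ∈ Set.Icc 0 (dist p (a k)) := ⟨dist_nonneg, le_refl _⟩
      have hd : dist (γk k s) (a k) = dist p (a k) - s := by
        have := hγkgeo k s hmem (dist p (a k)) hmem2
        rw [hγk1 k] at this
        rw [this, abs_of_nonpos (by linarith)]
        ring
      have htri : dist x (a k) ≤ dist x (γk k s) + dist (γk k s) (a k) :=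
        dist_triangle _ _ _
      rw [hd] at htri
      linarith
    have hL : Tendsto (fun k => dist x (a k) - dist o (a k)) atTop (𝓝 (ξ x)) := hξ x
    have hR : Tendsto (fun k => dist x (γk k s) + (dist p (a k) - dist o (a k)) - s)
        atTop (𝓝 (dist x (γ s) + ξ p - s)) := by
      exact Tendsto.sub_const
        ((((continuous_dist.comp (Continuous.prodMk_right x)).tendsto _).comp
          (hconv s hs)).add (hξ p)) s
    have := le_of_tendsto_of_tendsto hL hR hineq
    linarith [this]
  -- Step 2: take s → ∞
  have hlim : Tendsto (fun s : ℝ => ξ p + (dist x (γ s) - s)) atTop (𝓝 (ξ p + b)) :=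
    hb.const_add _
  refine ge_of_tendsto hlim ?_
  filter_upwards [eventually_ge_atTop (0 : ℝ)] with s hs using key s hs
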